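/- Let ((μ_z),(ν_z)) ∈ 𝒫_X^Y(μ,ν) be a partition pair attaining c^{Z_m}(μ,ν), i.e. c^{Z_m}(μ,ν) = Σ_{z∈Z_m}[∫_X c¹(x,z) dμ_z + ∫_Y c²(z,y) dν_z]. For each z ∈ Z_m let ζ(z) ∈ Z be a minimizer of ζ ↦ ∫_X c¹(x,ζ) dμ_z(x) + ∫_Y c²(ζ,y) dν_z(y), and let Z_m^{new} := {ζ(z) : z ∈ Z_m}. Then c^{Z_m^{new}}(μ,ν) ≤ c^{Z_m}(μ,ν), where c^{Z_m^{new}}(x,y) := min_{ζ∈Z_m^{new}}[c¹(x,ζ)+c²(ζ,y)] and c^{Z_m^{new}}(μ,ν) is the corresponding Kantorovich infimum over couplings of μ and ν. -/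

import Mathlib

open MeasureTheory

/-- Kantorovich optimal transport cost between `μ` and `ν` for the cost `c`. -/
noncomputable def kant {X Y : Type*} [MeasurableSpace X] [MeasurableSpace Y]
    (μ : Measure X) (ν : Measure Y) (c : X → Y → ℝ) : ℝ :=
  sInf {t : ℝ | ∃ π : Measure (X × Y), IsProbabilityMeasure π ∧
    π.map Prod.fst = μ ∧ π.map Prod.snd = ν ∧ t = ∫ q, c q.1 q.2 ∂π}

private lemma map_finset_sum' {α β ι : Type*} [MeasurableSpace α] [MeasurableSpace β]
    {f : α → β} (hf : Measurable f) (s : Finset ι) (m : ι → Measure α) :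
    (∑ i ∈ s, m i).map f = ∑ i ∈ s, (m i).map f := by
  classical
  induction s using Finset.induction with
  | empty => simp
  | insert _ _ h ih => simp [Finset.sum_insert h, Measure.map_add _ _ hf, ih]

private lemma integrable_of_bdd' {α : Type*} [MeasurableSpace α] {m : Measure α}
    [IsFiniteMeasure m] {f : α → ℝ} (hf : AEStronglyMeasurable f m) {M : ℝ}
    (hM : ∀ a, |f a| ≤ M) : Integrable f m :=
  ⟨hf, HasFiniteIntegral.of_bounded (C := M)
    (ae_of_all _ (by simpa [Real.norm_eq_abs] using hM))⟩

theorem stmt_11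
    {X Y Z : Type*} [TopologicalSpace X] [PolishSpace X] [MeasurableSpace X] [BorelSpace X]
    [TopologicalSpace Y] [PolishSpace Y] [MeasurableSpace Y] [BorelSpace Y]
    [MetricSpace Z] [CompactSpace Z]
    (μ : Measure X) (ν : Measure Y) [IsProbabilityMeasure μ] [IsProbabilityMeasure ν]
    (c1 : X → Z → ℝ) (c2 : Z → Y → ℝ)
    (hc1 : Continuous fun q : X × Z => c1 q.1 q.2) (hb1 : ∃ M, ∀ x w, |c1 x w| ≤ M)
    (hc2 : Continuous fun q : Z × Y => c2 q.1 q.2) (hb2 : ∃ M, ∀ w y, |c2 w y| ≤ M)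
    (Zm : Finset Z) (hZm : Zm.Nonempty)
    (μv : Zm → Measure X) (νv : Zm → Measure Y) (r : Zm → ℝ)
    (hrpos : ∀ z, 0 ≤ r z) (hrsum : ∑ z, r z = 1)
    (hμsum : (∑ z, μv z) = μ) (hνsum : (∑ z, νv z) = ν)
    (hμmass : ∀ z, μv z Set.univ = ENNReal.ofReal (r z))
    (hνmass : ∀ z, νv z Set.univ = ENNReal.ofReal (r z))
    (hopt : kant μ ν (fun x y => ⨅ z : Zm, (c1 x z + c2 z y))
      = ∑ z, ((∫ x, c1 x z ∂(μv z)) + ∫ y, c2 z y ∂(νv z)))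
    (ζ : Zm → Z)
    (hζ : ∀ z : Zm, ∀ w : Z,
      (∫ x, c1 x (ζ z) ∂(μv z)) + (∫ y, c2 (ζ z) y ∂(νv z))
        ≤ (∫ x, c1 x w ∂(μv z)) + ∫ y, c2 w y ∂(νv z)) :
    kant μ ν (fun x y => ⨅ z : Zm, (c1 x (ζ z) + c2 (ζ z) y))
      ≤ kant μ ν (fun x y => ⨅ z : Zm, (c1 x z + c2 z y)) := by
  classical
  haveI : Nonempty ↥Zm := Finset.nonempty_coe_sort.mpr hZm
  obtain ⟨M1, hM1⟩ := hb1
  obtain ⟨M2, hM2⟩ := hb2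
  set N : ℝ := max M1 0 + max M2 0 with hN
  have hN0 : 0 ≤ N := by positivity
  have hb1' : ∀ x w, |c1 x w| ≤ max M1 0 := fun x w => (hM1 x w).trans (le_max_left _ _)
  have hb2' : ∀ w y, |c2 w y| ≤ max M2 0 := fun w y => (hM2 w y).trans (le_max_left _ _)
  -- pieces of the cost are continuous
  have hcont1 : ∀ w : Z, Continuous fun q : X × Y => c1 q.1 w := fun w =>
    hc1.comp (continuous_fst.prodMk continuous_const)
  have hcont2 : ∀ w : Z, Continuous fun q : X × Y => c2 w q.2 := fun w =>
    hc2.comp (continuous_const.prodMk continuous_snd)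
  -- the infimum cost as a Finset.inf'
  have hinf_eq : ∀ (g : Zm → Z) (q : X × Y),
      (⨅ z : Zm, (c1 q.1 (g z) + c2 (g z) q.2))
        = Finset.univ.inf' Finset.univ_nonempty (fun z : Zm => c1 q.1 (g z) + c2 (g z) q.2) :=
    fun g q => (Finset.inf'_univ_eq_ciInf _).symm
  have hbnd : ∀ (g : Zm → Z) (q : X × Y),
      |⨅ z : Zm, (c1 q.1 (g z) + c2 (g z) q.2)| ≤ N := by
    intro g q
    rw [hinf_eq g q, abs_le]
    constructor
    · apply Finset.le_inf'
      intro z _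
      have h1 := (abs_le.mp (hb1' q.1 (g z))).1
      have h2 := (abs_le.mp (hb2' (g z) q.2)).1
      simp only [hN]; linarith
    · obtain ⟨z0⟩ := (inferInstance : Nonempty ↥Zm)
      refine le_trans (Finset.inf'_le _ (Finset.mem_univ z0)) ?_
      have h1 := (abs_le.mp (hb1' q.1 (g z0))).2
      have h2 := (abs_le.mp (hb2' (g z0) q.2)).2
      simp only [hN]; linarith
  have hbddb : ∀ (g : Zm → Z) (x : X) (y : Y),
      BddBelow (Set.range fun z : Zm => c1 x (g z) + c2 (g z) y) := by
    intro g x y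
    refine ⟨-N, ?_⟩
    rintro _ ⟨z, rfl⟩
    have h1 := (abs_le.mp (hb1' x (g z))).1
    have h2 := (abs_le.mp (hb2' (g z) y)).1
    simp only [hN]; linarith
  have hcontF : ∀ g : Zm → Z,
      Continuous fun q : X × Y => ⨅ z : Zm, (c1 q.1 (g z) + c2 (g z) q.2) := by
    intro g
    have : (fun q : X × Y => ⨅ z : Zm, (c1 q.1 (g z) + c2 (g z) q.2))
        = fun q => Finset.univ.inf' Finset.univ_nonempty
            (fun z : Zm => c1 q.1 (g z) + c2 (g z) q.2) := funext fun q => hinf_eq g q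
    rw [this]
    exact Continuous.finset_inf'_apply _ fun z _ => (hcont1 (g z)).add (hcont2 (g z))
  -- finiteness of the partition measures
  have finμ : ∀ z, IsFiniteMeasure (μv z) := fun z =>
    ⟨by rw [hμmass]; exact ENNReal.ofReal_lt_top⟩
  have finν : ∀ z, IsFiniteMeasure (νv z) := fun z =>
    ⟨by rw [hνmass]; exact ENNReal.ofReal_lt_top⟩
  -- the candidate coupling
  set T : Zm → Measure (X × Y) :=
    fun z => (ENNReal.ofReal (r z))⁻¹ • ((μv z).prod (νv z)) with hT
  set π : Measure (X × Y) := ∑ z, T z with hπ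
  have hcoefμ : ∀ z, ((ENNReal.ofReal (r z))⁻¹ * ENNReal.ofReal (r z)) • μv z = μv z := by
    intro z
    rcases eq_or_lt_of_le (hrpos z) with h | h
    · have h0 : μv z = 0 := by
        rw [← Measure.measure_univ_eq_zero, hμmass, ← h, ENNReal.ofReal_zero]
      simp [h0]
    · rw [ENNReal.inv_mul_cancel (by simpa [ENNReal.ofReal_eq_zero] using h)
        ENNReal.ofReal_ne_top, one_smul]
  have hcoefν : ∀ z, ((ENNReal.ofReal (r z))⁻¹ * ENNReal.ofReal (r z)) • νv z = νv z := by
    intro z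
    rcases eq_or_lt_of_le (hrpos z) with h | h
    · have h0 : νv z = 0 := by
        rw [← Measure.measure_univ_eq_zero, hνmass, ← h, ENNReal.ofReal_zero]
      simp [h0]
    · rw [ENNReal.inv_mul_cancel (by simpa [ENNReal.ofReal_eq_zero] using h)
        ENNReal.ofReal_ne_top, one_smul]
  -- marginals of the pieces
  have hfstz : ∀ z, (T z).map Prod.fst = μv z := by
    intro z
    haveI := finμ z; haveI := finν z
    rw [hT]
    rw [Measure.map_smul, Measure.map_fst_prod, hνmass, smul_smul]
    exact hcoefμ z
  have hsndz : ∀ z, (T z).map Prod.snd = νv z := by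
    intro z
    haveI := finμ z; haveI := finν z
    rw [hT]
    rw [Measure.map_smul, Measure.map_snd_prod, hμmass, smul_smul]
    exact hcoefν z
  have hfst : π.map Prod.fst = μ := by
    rw [hπ, map_finset_sum' measurable_fst, ← hμsum]
    exact Finset.sum_congr rfl fun z _ => hfstz z
  have hsnd : π.map Prod.snd = ν := by
    rw [hπ, map_finset_sum' measurable_snd, ← hνsum]
    exact Finset.sum_congr rfl fun z _ => hsndz z
  -- mass of the pieces
  have hTuniv : ∀ z, T z Set.univ = ENNReal.ofReal (r z) := by
    intro z
    haveI := finμ z; haveI := finν z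
    rw [hT]
    simp only [Measure.smul_apply, smul_eq_mul]
    rw [← Set.univ_prod_univ, Measure.prod_prod, hμmass, hνmass, ← mul_assoc]
    rcases eq_or_lt_of_le (hrpos z) with h | h
    · simp [← h]
    · rw [ENNReal.inv_mul_cancel (by simpa [ENNReal.ofReal_eq_zero] using h)
        ENNReal.ofReal_ne_top, one_mul]
  have finT : ∀ z, IsFiniteMeasure (T z) := fun z =>
    ⟨by rw [hTuniv]; exact ENNReal.ofReal_lt_top⟩
  have hπprob : IsProbabilityMeasure π := by
    constructor
    rw [hπ]
    simp only [Measure.finset_sum_apply]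
    rw [Finset.sum_congr rfl fun z _ => hTuniv z,
      ← ENNReal.ofReal_sum_of_nonneg fun z _ => hrpos z, hrsum, ENNReal.ofReal_one]
  -- the new cost function
  set F : X × Y → ℝ := fun q => ⨅ z : Zm, (c1 q.1 (ζ z) + c2 (ζ z) q.2) with hF
  -- integrability facts
  have hintF : ∀ (m : Measure (X × Y)) [IsFiniteMeasure m], Integrable F m := by
    intro m _
    exact integrable_of_bdd' ((hcontF ζ).aestronglyMeasurable) (hbnd ζ)
  have hint1 : ∀ (z : Zm) (w : Z), Integrable (fun q : X × Y => c1 q.1 w) (T z) := by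
    intro z w
    haveI := finT z
    exact integrable_of_bdd' ((hcont1 w).aestronglyMeasurable) fun q => hb1' q.1 w
  have hint2 : ∀ (z : Zm) (w : Z), Integrable (fun q : X × Y => c2 w q.2) (T z) := by
    intro z w
    haveI := finT z
    exact integrable_of_bdd' ((hcont2 w).aestronglyMeasurable) fun q => hb2' w q.2
  -- integral of each piece
  have hpiece : ∀ z : Zm, ∫ q, F q ∂(T z)
      ≤ (∫ x, c1 x z ∂(μv z)) + ∫ y, c2 (z : Z) y ∂(νv z) := by
    intro z
    haveI := finT z
    haveI := finμ z; haveI := finν z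
    have step1 : ∫ q, F q ∂(T z)
        ≤ ∫ q : X × Y, (c1 q.1 (ζ z) + c2 (ζ z) q.2) ∂(T z) := by
      apply integral_mono (hintF (T z)) ((hint1 z (ζ z)).add (hint2 z (ζ z)))
      intro q
      exact ciInf_le (hbddb ζ q.1 q.2) z
    have e1 : ∫ q : X × Y, c1 q.1 (ζ z) ∂(T z) = ∫ x, c1 x (ζ z) ∂(μv z) := by
      have hc : Continuous fun x : X => c1 x (ζ z) :=
        hc1.comp (continuous_id.prodMk continuous_const)
      have hm : AEStronglyMeasurable (fun x : X => c1 x (ζ z)) ((T z).map Prod.fst) :=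
        hc.aestronglyMeasurable
      rw [← hfstz z]
      exact (integral_map measurable_fst.aemeasurable hm).symm
    have e2 : ∫ q : X × Y, c2 (ζ z) q.2 ∂(T z) = ∫ y, c2 (ζ z) y ∂(νv z) := by
      have hc : Continuous fun y : Y => c2 (ζ z) y :=
        hc2.comp (continuous_const.prodMk continuous_id)
      have hm : AEStronglyMeasurable (fun y : Y => c2 (ζ z) y) ((T z).map Prod.snd) :=
        hc.aestronglyMeasurable
      rw [← hsndz z]
      exact (integral_map measurable_snd.aemeasurable hm).symm
    have step2 : ∫ q : X × Y, (c1 q.1 (ζ z) + c2 (ζ z) q.2) ∂(T z)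
        = (∫ x, c1 x (ζ z) ∂(μv z)) + ∫ y, c2 (ζ z) y ∂(νv z) := by
      rw [integral_add (hint1 z (ζ z)) (hint2 z (ζ z)), e1, e2]
    calc ∫ q, F q ∂(T z) ≤ (∫ x, c1 x (ζ z) ∂(μv z)) + ∫ y, c2 (ζ z) y ∂(νv z) := by
          rw [← step2]; exact step1
      _ ≤ (∫ x, c1 x z ∂(μv z)) + ∫ y, c2 (z : Z) y ∂(νv z) := hζ z z
  -- total integral bound
  have htot : ∫ q, F q ∂π ≤ kant μ ν (fun x y => ⨅ z : Zm, (c1 x z + c2 z y)) := by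
    rw [hopt, hπ]
    rw [integral_finset_sum_measure fun z _ => by haveI := finT z; exact hintF (T z)]
    exact Finset.sum_le_sum fun z _ => hpiece z
  -- the infimum is bounded below
  have hbddS : BddBelow {t : ℝ | ∃ π' : Measure (X × Y), IsProbabilityMeasure π' ∧
      π'.map Prod.fst = μ ∧ π'.map Prod.snd = ν ∧ t = ∫ q, F q ∂π'} := by
    refine ⟨-N, ?_⟩
    rintro t ⟨π', hπ', -, -, rfl⟩
    haveI := hπ'
    haveI : IsFiniteMeasure π' := ⟨by rw [hπ'.measure_univ]; exact ENNReal.one_lt_top⟩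
    have heq : (-N : ℝ) = ∫ _ : X × Y, (-N : ℝ) ∂π' := by simp
    rw [heq]
    exact integral_mono (integrable_const _) (hintF π')
      fun q => (abs_le.mp (hbnd ζ q)).1
  calc kant μ ν (fun x y => ⨅ z : Zm, (c1 x (ζ z) + c2 (ζ z) y))
      ≤ ∫ q, F q ∂π := csInf_le hbddS ⟨π, hπprob, hfst, hsnd, rfl⟩
    _ ≤ _ := htot
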